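/- Let k be a local field. The projective general linear group PGL₂(k) = GL₂(k)/Z(GL₂(k)), endowed with the analytic topology (the quotient of the topology GL₂(k) inherits as a subspace of the 2×2 matrices over k), is a minimal topological group: it admits no strictly coarser Hausdorff group topology. -/

import Mathlib

/-- The projective general linear group `PGL₂(k) = GL₂(k)/Z(GL₂(k))`. -/
def PGL2 (k : Type*) [Field k] : Type _ :=
  GL (Fin 2) k ⧸ Subgroup.center (GL (Fin 2) k)

noncomputable instance (k : Type*) [Field k] : Group (PGL2 k) :=
  inferInstanceAs (Group (GL (Fin 2) k ⧸ Subgroup.center (GL (Fin 2) k)))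

/-- The topology `GL₂(k)` inherits as a subspace of the `2 × 2` matrices over `k`. -/
def gl2Topology (k : Type*) [NontriviallyNormedField k] : TopologicalSpace (GL (Fin 2) k) :=
  TopologicalSpace.induced (Units.val : GL (Fin 2) k → Matrix (Fin 2) (Fin 2) k) inferInstance

/-- The analytic topology on `PGL₂(k)`: the quotient of the topology `GL₂(k)` inherits as a
subspace of the `2 × 2` matrices over `k`. -/
def pgl2Topology (k : Type*) [NontriviallyNormedField k] : TopologicalSpace (PGL2 k) :=
  (gl2Topology k).coinduced
    (QuotientGroup.mk : GL (Fin 2) k → GL (Fin 2) k ⧸ Subgroup.center (GL (Fin 2) k))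

open Matrix Topology Filter

namespace Stmt7Aux

variable {k : Type*} [Field k]

def lgl (c : k) : GL (Fin 2) k :=
  ⟨!![1, 0; c, 1], !![1, 0; -c, 1],
    by rw [Matrix.mul_fin_two, Matrix.one_fin_two]; norm_num,
    by rw [Matrix.mul_fin_two, Matrix.one_fin_two]; norm_num⟩

def ugl (b : k) : GL (Fin 2) k :=
  ⟨!![1, b; 0, 1], !![1, -b; 0, 1],
    by rw [Matrix.mul_fin_two, Matrix.one_fin_two]; norm_num,
    by rw [Matrix.mul_fin_two, Matrix.one_fin_two]; norm_num⟩

def agl (s : kˣ) : GL (Fin 2) k :=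
  ⟨!![(s : k), 0; 0, 1], !![((s⁻¹ : kˣ) : k), 0; 0, 1],
    by rw [Matrix.mul_fin_two, Matrix.one_fin_two]; norm_num [Units.mul_inv, Units.inv_mul],
    by rw [Matrix.mul_fin_two, Matrix.one_fin_two]; norm_num [Units.mul_inv, Units.inv_mul]⟩

def wgl : GL (Fin 2) k :=
  ⟨!![0, 1; -1, 0], !![0, -1; 1, 0],
    by rw [Matrix.mul_fin_two, Matrix.one_fin_two]; norm_num,
    by rw [Matrix.mul_fin_two, Matrix.one_fin_two]; norm_num⟩

def zgl (m : kˣ) : GL (Fin 2) k :=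
  ⟨!![(m : k), 0; 0, (m : k)], !![((m⁻¹ : kˣ) : k), 0; 0, ((m⁻¹ : kˣ) : k)],
    by rw [Matrix.mul_fin_two, Matrix.one_fin_two]; norm_num [Units.mul_inv, Units.inv_mul],
    by rw [Matrix.mul_fin_two, Matrix.one_fin_two]; norm_num [Units.mul_inv, Units.inv_mul]⟩

lemma zgl_val (m : kˣ) : (zgl m).val = (m : k) • (1 : Matrix (Fin 2) (Fin 2) k) := by
  show !![(m : k), 0; 0, (m : k)] = _
  rw [Matrix.one_fin_two, Matrix.smul_of]
  ext i j
  fin_cases i <;> fin_cases j <;> simp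

lemma zgl_mem_center (m : kˣ) : zgl m ∈ Subgroup.center (GL (Fin 2) k) := by
  rw [Subgroup.mem_center_iff]
  intro g
  ext : 1
  show g.val * (zgl m).val = (zgl m).val * g.val
  rw [zgl_val, mul_smul_comm, smul_mul_assoc, one_mul, mul_one]

/-- the quotient `PGL₂`. -/
abbrev Q (k : Type*) [Field k] : Type _ :=
  GL (Fin 2) k ⧸ Subgroup.center (GL (Fin 2) k)

def pp (u : GL (Fin 2) k) : Q k := QuotientGroup.mk u

lemma pp_mul (u v : GL (Fin 2) k) : pp (u * v) = pp u * pp v := rfl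

lemma pp_zgl (m : kˣ) : pp (zgl m) = (1 : Q k) :=
  (QuotientGroup.eq_one_iff _).2 (zgl_mem_center m)

lemma agl_lgl_agl_inv (s : kˣ) (z : k) :
    agl s * lgl z * (agl s)⁻¹ = lgl (z * ((s⁻¹ : kˣ) : k)) := by
  ext : 1
  show (!![(s : k), 0; 0, 1] * !![1, 0; z, 1]) * !![((s⁻¹ : kˣ) : k), 0; 0, 1] = !![1, 0; z * _, 1]
  rw [Matrix.mul_fin_two, Matrix.mul_fin_two]
  have h1 : (s : k) * ((s⁻¹ : kˣ) : k) = 1 := by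
    rw [← Units.val_mul, mul_inv_cancel, Units.val_one]
  congr 1 <;> ring_nf <;> simp [h1, mul_comm]

lemma lgl_zero : (lgl (0 : k)) = 1 := by
  ext : 1
  show !![(1:k), 0; 0, 1] = 1
  rw [Matrix.one_fin_two]

lemma lgl_one_not_center : lgl (1 : k) ∉ Subgroup.center (GL (Fin 2) k) := by
  intro h
  have h2 := (Subgroup.mem_center_iff.1 h) (ugl 1)
  have h3 : (ugl (1:k)).val * (lgl 1).val = (lgl (1:k)).val * (ugl 1).val := by
    rw [← Units.val_mul, ← Units.val_mul, h2]
  have h4 : (!![1, 1; 0, 1] * !![1, 0; 1, 1] : Matrix (Fin 2) (Fin 2) k)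
      = !![1, 0; 1, 1] * !![1, 1; 0, 1] := h3
  rw [Matrix.mul_fin_two, Matrix.mul_fin_two] at h4
  have h5 := congrFun (congrFun h4 0) 0
  norm_num at h5
  exact one_ne_zero ((add_right_injective 1 (by linear_combination h5)) : (1 : k) = 0)

lemma cell_mat (a b c d : k) (ha : a ≠ 0) (hD : a * d - b * c ≠ 0) :
    !![a, b; c, d] =
      (((!![a, 0; 0, a] * !![1, 0; c / a, 1]) * !![(a * d - b * c) / a ^ 2, 0; 0, (a * d - b * c) / a ^ 2])
        * !![a ^ 2 / (a * d - b * c), 0; 0, 1]) * !![1, b / a; 0, 1] := by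
  rw [Matrix.mul_fin_two, Matrix.mul_fin_two, Matrix.mul_fin_two, Matrix.mul_fin_two]
  have hD' : a * d - c * b ≠ 0 := by rwa [mul_comm c b]
  have hD'' : d * a - b * c ≠ 0 := by rwa [mul_comm d a]
  ext i j
  fin_cases i <;> fin_cases j <;>
    · simp only [Matrix.of_apply, Matrix.cons_val', Matrix.cons_val_zero, Matrix.cons_val_one,
        Matrix.head_cons, Matrix.empty_val', Matrix.cons_val_fin_one, Fin.zero_eta, Fin.mk_one]
      field_simp
      try ring
      try linear_combination (-(a ^ 2 * b * c)) * mul_inv_cancel₀ hD''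

/-- The cell decomposition of an element of `GL₂` with nonzero top-left entry. -/
lemma cell (u : GL (Fin 2) k) (hm : u.val 0 0 ≠ 0) :
    ∃ s : kˣ, ((s⁻¹ : kˣ) : k) = (u.val).det / (u.val 0 0) ^ 2 ∧
      pp u = pp (lgl (u.val 1 0 / u.val 0 0)) * pp (agl s) * pp (ugl (u.val 0 1 / u.val 0 0)) := by
  have hdet : (u.val).det ≠ 0 := by
    have := (Matrix.isUnit_iff_isUnit_det u.val).1 u.isUnit
    exact this.ne_zero
  have he : (u.val).det / (u.val 0 0) ^ 2 ≠ 0 := div_ne_zero hdet (pow_ne_zero 2 hm)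
  refine ⟨(Units.mk0 _ he)⁻¹, by simp, ?_⟩
  have hD : u.val 0 0 * u.val 1 1 - u.val 0 1 * u.val 1 0 ≠ 0 := by
    rw [← Matrix.det_fin_two]; exact hdet
  have hsinv : (((Units.mk0 _ he)⁻¹ : kˣ) : k) = (u.val 0 0) ^ 2 / (u.val).det := by
    simp [Units.mk0, inv_div]
  have key : u = zgl (Units.mk0 _ hm) * lgl (u.val 1 0 / u.val 0 0) * zgl (Units.mk0 _ he)
      * agl (Units.mk0 _ he)⁻¹ * ugl (u.val 0 1 / u.val 0 0) := by
    ext : 1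
    show u.val = (((!![u.val 0 0, 0; 0, u.val 0 0] * !![1, 0; u.val 1 0 / u.val 0 0, 1])
        * !![(u.val).det / (u.val 0 0) ^ 2, 0; 0, (u.val).det / (u.val 0 0) ^ 2])
        * !![(((Units.mk0 _ he)⁻¹ : kˣ) : k), 0; 0, 1]) * !![1, u.val 0 1 / u.val 0 0; 0, 1]
    rw [hsinv]
    rw [Matrix.det_fin_two]
    conv_lhs => rw [Matrix.eta_fin_two u.val]
    exact cell_mat _ _ _ _ hm hD
  rw [congrArg pp key]
  simp only [pp_mul, pp_zgl, one_mul, mul_one]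


lemma pp_inv (u : GL (Fin 2) k) : pp (u⁻¹) = (pp u)⁻¹ := rfl

lemma wgl_mul_val (u : GL (Fin 2) k) :
    (wgl * u).val = !![u.val 1 0, u.val 1 1; -u.val 0 0, -u.val 0 1] := by
  show (!![0, 1; -1, 0] : Matrix (Fin 2) (Fin 2) k) * u.val = _
  conv_lhs => rw [Matrix.eta_fin_two u.val]
  rw [Matrix.mul_fin_two]
  norm_num

lemma mul_wgl_val (u : GL (Fin 2) k) :
    (u * wgl).val = !![-u.val 0 1, u.val 0 0; -u.val 1 1, u.val 1 0] := by
  show u.val * (!![0, 1; -1, 0] : Matrix (Fin 2) (Fin 2) k) = _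
  conv_lhs => rw [Matrix.eta_fin_two u.val]
  rw [Matrix.mul_fin_two]
  norm_num

lemma smul_mat_val (m : kˣ) (u : GL (Fin 2) k) :
    ((zgl m)⁻¹ * u).val = ((m⁻¹ : kˣ) : k) • u.val := by
  show (!![((m⁻¹ : kˣ) : k), 0; 0, ((m⁻¹ : kˣ) : k)] : Matrix (Fin 2) (Fin 2) k) * u.val = _
  conv_lhs => rw [Matrix.eta_fin_two u.val]
  rw [Matrix.mul_fin_two]
  ext i j
  fin_cases i <;> fin_cases j <;> simp [Matrix.smul_apply]

section Normed

variable {k : Type*} [NontriviallyNormedField k]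

/-- the compact sets exhausting `PGL₂`. -/
def KK (ε : ℝ) : Set (Q k) :=
  {x | ∃ u : GL (Fin 2) k, pp u = x ∧ (∀ i j, ‖u.val i j‖ ≤ 1) ∧ ε ≤ ‖(u.val).det‖}

lemma KK_antitone {ε ε' : ℝ} (h : ε ≤ ε') : KK (k := k) ε' ⊆ KK ε := by
  rintro x ⟨u, h1, h2, h3⟩
  exact ⟨u, h1, h2, le_trans h h3⟩

lemma mem_KK_self (u : GL (Fin 2) k) (i j : Fin 2)
    (hmax : ∀ i' j', ‖u.val i' j'‖ ≤ ‖u.val i j‖) :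
    pp u ∈ KK (‖(u.val).det‖ / ‖u.val i j‖ ^ 2) := by
  have hdet : (u.val).det ≠ 0 :=
    ((Matrix.isUnit_iff_isUnit_det u.val).1 u.isUnit).ne_zero
  have hm : u.val i j ≠ 0 := by
    intro h0
    apply hdet
    have hz : ∀ i' j', u.val i' j' = 0 := by
      intro i' j'
      have := hmax i' j'
      rw [h0, norm_zero] at this
      exact norm_le_zero_iff.1 this
    rw [Matrix.det_fin_two, hz, hz, hz, hz]
    ring
  have hmn : 0 < ‖u.val i j‖ := norm_pos_iff.2 hm
  refine ⟨(zgl (Units.mk0 _ hm))⁻¹ * u, ?_, ?_, ?_⟩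
  · rw [pp_mul, pp_inv, pp_zgl]; group
  · intro i' j'
    rw [smul_mat_val]
    rw [Matrix.smul_apply, norm_smul]
    have : ‖((Units.mk0 (u.val i j) hm)⁻¹ : kˣ).val‖ = ‖u.val i j‖⁻¹ := by
      simp [Units.mk0]
    rw [this]
    rw [inv_mul_le_iff₀ hmn, mul_one]
    exact hmax i' j'
  · rw [smul_mat_val, Matrix.det_smul]
    have h5 : ‖((Units.mk0 (u.val i j) hm)⁻¹ : kˣ).val‖ = ‖u.val i j‖⁻¹ := by
      simp [Units.mk0]
    rw [Fintype.card_fin, norm_mul, norm_pow, h5, div_eq_mul_inv, mul_comm, inv_pow]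

lemma decomp_of_max (u : GL (Fin 2) k) (hmax : ∀ i j, ‖u.val i j‖ ≤ ‖u.val 0 0‖) :
    ∃ (c b : k) (s : kˣ), ‖c‖ ≤ 1 ∧ ‖b‖ ≤ 1 ∧
      pp u = pp (lgl c) * pp (agl s) * pp (ugl b) ∧
      ‖((s⁻¹ : kˣ) : k)‖ = ‖(u.val).det‖ / ‖u.val 0 0‖ ^ 2 := by
  have hdet : (u.val).det ≠ 0 :=
    ((Matrix.isUnit_iff_isUnit_det u.val).1 u.isUnit).ne_zero
  have hm : u.val 0 0 ≠ 0 := by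
    intro h0
    apply hdet
    have hz : ∀ i' j', u.val i' j' = 0 := by
      intro i' j'
      have := hmax i' j'
      rw [h0, norm_zero] at this
      exact norm_le_zero_iff.1 this
    rw [Matrix.det_fin_two, hz, hz, hz, hz]
    ring
  have hmn : 0 < ‖u.val 0 0‖ := norm_pos_iff.2 hm
  obtain ⟨s, hs, hu⟩ := cell u hm
  refine ⟨_, _, s, ?_, ?_, hu, ?_⟩
  · rw [norm_div, div_le_one hmn]; exact hmax 1 0
  · rw [norm_div, div_le_one hmn]; exact hmax 0 1
  · rw [hs, norm_div, norm_pow]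

/-- Full decomposition of an arbitrary element of `PGL₂`. -/
lemma decomp (g : Q k) : ∃ (p₁ p₂ : Q k) (c b : k) (s : kˣ),
    (p₁ = 1 ∨ p₁ = (pp (wgl))⁻¹) ∧ (p₂ = 1 ∨ p₂ = (pp (wgl : GL (Fin 2) k))⁻¹) ∧
    ‖c‖ ≤ 1 ∧ ‖b‖ ≤ 1 ∧
    g = p₁ * (pp (lgl c) * pp (agl s) * pp (ugl b)) * p₂ ∧
    g ∈ KK ‖((s⁻¹ : kˣ) : k)‖ := by
  obtain ⟨u, rfl⟩ := QuotientGroup.mk_surjective g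
  obtain ⟨⟨i, j⟩, -, hp⟩ := Finset.exists_max_image (Finset.univ : Finset (Fin 2 × Fin 2))
    (fun p => ‖u.val p.1 p.2‖) ⟨(0, 0), Finset.mem_univ _⟩
  have hmax : ∀ i' j', ‖u.val i' j'‖ ≤ ‖u.val i j‖ := fun i' j' =>
    hp (i', j') (Finset.mem_univ _)
  have hKK : pp u ∈ KK (‖(u.val).det‖ / ‖u.val i j‖ ^ 2) := mem_KK_self u i j hmax
  fin_cases i <;> fin_cases j
  · -- (0,0)
    obtain ⟨c, b, s, h1, h2, h3, h4⟩ := decomp_of_max u hmax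
    exact ⟨1, 1, c, b, s, Or.inl rfl, Or.inl rfl, h1, h2,
      by show pp u = _; rw [one_mul, mul_one]; exact h3, by rw [h4]; exact hKK⟩
  · -- (0,1) : u₁ = u * wgl
    have hval := mul_wgl_val u
    have hmax1 : ∀ i' j', ‖(u * wgl).val i' j'‖ ≤ ‖(u * wgl).val 0 0‖ := by
      intro i' j'
      rw [hval]
      fin_cases i' <;> fin_cases j' <;> simp <;>
        first
          | exact hmax 0 1
          | exact hmax 0 0
          | exact hmax 1 1
          | exact hmax 1 0
    obtain ⟨c, b, s, h1, h2, h3, h4⟩ := decomp_of_max (u * wgl) hmax1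
    refine ⟨1, (pp (wgl : GL (Fin 2) k))⁻¹, c, b, s, Or.inl rfl, Or.inr rfl, h1, h2, ?_, ?_⟩
    · show pp u = _
      rw [one_mul, ← h3, ← pp_inv, ← pp_mul, mul_inv_cancel_right]
    · rw [h4]
      have hd : ((u * wgl).val).det = (u.val).det := by
        rw [Units.val_mul, Matrix.det_mul]
        have : (wgl.val : Matrix (Fin 2) (Fin 2) k).det = 1 := by
          show (!![0, 1; -1, 0] : Matrix (Fin 2) (Fin 2) k).det = 1
          rw [Matrix.det_fin_two_of]; norm_num
        rw [this, mul_one]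
      have h00 : ‖(u * wgl).val 0 0‖ = ‖u.val 0 1‖ := by rw [hval]; simp
      rw [hd, h00]
      exact hKK
  · -- (1,0) : u₁ = wgl * u
    have hval := wgl_mul_val u
    have hmax1 : ∀ i' j', ‖(wgl * u).val i' j'‖ ≤ ‖(wgl * u).val 0 0‖ := by
      intro i' j'
      rw [hval]
      fin_cases i' <;> fin_cases j' <;> simp <;>
        first
          | exact hmax 0 1
          | exact hmax 0 0
          | exact hmax 1 1
          | exact hmax 1 0
    obtain ⟨c, b, s, h1, h2, h3, h4⟩ := decomp_of_max (wgl * u) hmax1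
    refine ⟨(pp (wgl : GL (Fin 2) k))⁻¹, 1, c, b, s, Or.inr rfl, Or.inl rfl, h1, h2, ?_, ?_⟩
    · show pp u = _
      rw [mul_one, ← h3, ← pp_inv, ← pp_mul, inv_mul_cancel_left]
    · rw [h4]
      have hd : ((wgl * u).val).det = (u.val).det := by
        rw [Units.val_mul, Matrix.det_mul]
        have : (wgl.val : Matrix (Fin 2) (Fin 2) k).det = 1 := by
          show (!![0, 1; -1, 0] : Matrix (Fin 2) (Fin 2) k).det = 1
          rw [Matrix.det_fin_two_of]; norm_num
        rw [this, one_mul]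
      have h00 : ‖(wgl * u).val 0 0‖ = ‖u.val 1 0‖ := by rw [hval]; simp
      rw [hd, h00]
      exact hKK
  · -- (1,1) : u₁ = wgl * u * wgl
    have hval1 := wgl_mul_val u
    have hval : ((wgl * u) * wgl).val
        = !![-(u.val 1 1), u.val 1 0; u.val 0 1, -(u.val 0 0)] := by
      rw [mul_wgl_val (wgl * u), hval1]
      norm_num
    have hmax1 : ∀ i' j', ‖((wgl * u) * wgl).val i' j'‖ ≤ ‖((wgl * u) * wgl).val 0 0‖ := by
      intro i' j'
      rw [hval]
      fin_cases i' <;> fin_cases j' <;> simp <;>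
        first
          | exact hmax 0 1
          | exact hmax 0 0
          | exact hmax 1 1
          | exact hmax 1 0
    obtain ⟨c, b, s, h1, h2, h3, h4⟩ := decomp_of_max ((wgl * u) * wgl) hmax1
    refine ⟨(pp (wgl : GL (Fin 2) k))⁻¹, (pp (wgl : GL (Fin 2) k))⁻¹, c, b, s,
      Or.inr rfl, Or.inr rfl, h1, h2, ?_, ?_⟩
    · show pp u = _
      have hu : u = wgl⁻¹ * (wgl * u * wgl) * wgl⁻¹ := by group
      rw [congrArg pp hu, pp_mul, pp_mul, pp_inv, h3]
    · rw [h4]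
      have hdw : (wgl.val : Matrix (Fin 2) (Fin 2) k).det = 1 := by
        show (!![0, 1; -1, 0] : Matrix (Fin 2) (Fin 2) k).det = 1
        rw [Matrix.det_fin_two_of]; norm_num
      have hd : (((wgl * u) * wgl).val).det = (u.val).det := by
        rw [Units.val_mul, Units.val_mul, Matrix.det_mul, Matrix.det_mul, hdw, mul_one, one_mul]
      have h00 : ‖((wgl * u) * wgl).val 0 0‖ = ‖u.val 1 1‖ := by rw [hval]; simp
      rw [hd, h00]
      exact hKK

end Normed

section Topology

variable {k : Type*} [NontriviallyNormedField k]

lemma continuous_pp_of (X : Type*) [TopologicalSpace X] (f : X → GL (Fin 2) k)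
    (hf : Continuous fun x => (f x).val) (hfi : Continuous fun x => ((f x)⁻¹).val) :
    Continuous fun x => pp (f x) := by
  have hu : Continuous f := Units.continuous_iff.2 ⟨hf, hfi⟩
  exact (continuous_quot_mk : Continuous (QuotientGroup.mk : GL (Fin 2) k → Q k)).comp hu

lemma continuous_ppl : Continuous fun c : k => pp (lgl c) := by
  apply continuous_pp_of
  · apply continuous_matrix
    intro i j
    show Continuous fun c : k => !![1, 0; c, 1] i j
    fin_cases i <;> fin_cases j <;> simp <;>
      first
        | exact continuous_const
        | exact continuous_id
  · apply continuous_matrix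
    intro i j
    show Continuous fun c : k => !![1, 0; -c, 1] i j
    fin_cases i <;> fin_cases j <;> simp <;>
      first
        | exact continuous_const
        | exact continuous_id.neg
        | exact continuous_neg

lemma continuous_ppu : Continuous fun b : k => pp (ugl b) := by
  apply continuous_pp_of
  · apply continuous_matrix
    intro i j
    show Continuous fun b : k => !![1, b; 0, 1] i j
    fin_cases i <;> fin_cases j <;> simp <;>
      first
        | exact continuous_const
        | exact continuous_id
  · apply continuous_matrix
    intro i j
    show Continuous fun b : k => !![1, -b; 0, 1] i j
    fin_cases i <;> fin_cases j <;> simp <;>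
      first
        | exact continuous_const
        | exact continuous_id.neg
        | exact continuous_neg

lemma sigma_compact_inter {C O : Set (Q k)} (hC : IsCompact C) (hO : IsOpen O) :
    IsCompact (C ∩ Oᶜ) := hC.inter_right hO.isClosed_compl

lemma ppl_tendsto (c₀ : k) :
    Filter.Tendsto (fun c : k => pp (lgl c)) (nhds c₀) (nhds (pp (lgl c₀))) :=
  continuous_ppl.tendsto c₀

lemma ppu_tendsto (b₀ : k) :
    Filter.Tendsto (fun b : k => pp (ugl b)) (nhds b₀) (nhds (pp (ugl b₀))) :=
  continuous_ppu.tendsto b₀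

lemma KK_isCompact [ProperSpace k] {ε : ℝ} (hε : 0 < ε) : IsCompact (KK (k := k) ε) := by
  classical
  set S : Set (Matrix (Fin 2) (Fin 2) k) :=
    {A | (∀ i j, ‖A i j‖ ≤ 1) ∧ ε ≤ ‖A.det‖} with hS
  have hdet_ne : ∀ A ∈ S, A.det ≠ 0 := by
    intro A hA h0
    have h2 := hA.2
    rw [h0, norm_zero] at h2
    exact absurd h2 (not_le.2 hε)
  have hScomp : IsCompact S := by
    have hBcomp : IsCompact (Set.univ.pi fun _ : Fin 2 =>
        (Set.univ.pi fun _ : Fin 2 => Metric.closedBall (0 : k) 1)) :=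
      isCompact_univ_pi fun _ =>
        isCompact_univ_pi fun _ => isCompact_closedBall (0 : k) 1
    apply IsCompact.of_isClosed_subset hBcomp
    · have heq : S = (⋂ i, ⋂ j, {A : Matrix (Fin 2) (Fin 2) k | ‖A i j‖ ≤ 1})
          ∩ {A : Matrix (Fin 2) (Fin 2) k | ε ≤ ‖A.det‖} := by
        rw [hS]; ext A; simp [forall_and]
      rw [heq]
      refine IsClosed.inter (isClosed_iInter fun i => isClosed_iInter fun j => ?_)
        (isClosed_le continuous_const (continuous_id.matrix_det.norm))
      exact isClosed_le ((continuous_id.matrix_elem i j).norm) continuous_const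
    · intro A hA
      rw [Set.mem_univ_pi]
      intro i
      rw [Set.mem_univ_pi]
      intro j
      rw [Metric.mem_closedBall, dist_zero_right]
      exact hA.1 i j
  -- the map from S to Q k
  have hmap : ∃ f : S → Q k, Continuous f ∧ KK (k := k) ε = Set.range f := by
    refine ⟨fun A => pp (Matrix.nonsingInvUnit A.1
      (isUnit_iff_ne_zero.2 (hdet_ne A.1 A.2))), ?_, ?_⟩
    · apply continuous_pp_of
      · exact continuous_subtype_val
      · have heq : (fun A : S => ((Matrix.nonsingInvUnit A.1
            (isUnit_iff_ne_zero.2 (hdet_ne A.1 A.2)))⁻¹).val)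
            = fun A : S => ((A.1).det)⁻¹ • (A.1).adjugate := by
          funext A
          show (A.1)⁻¹ = _
          rw [Matrix.inv_def, Ring.inverse_eq_inv]
        rw [heq]
        exact ((continuous_subtype_val.matrix_det).inv₀
          (fun A => hdet_ne A.1 A.2)).smul (continuous_subtype_val.matrix_adjugate)
    · ext x
      constructor
      · rintro ⟨u, rfl, h2, h3⟩
        have hmem : (u.val : Matrix (Fin 2) (Fin 2) k) ∈ S := ⟨h2, h3⟩
        refine ⟨⟨u.val, hmem⟩, ?_⟩
        show pp (Matrix.nonsingInvUnit _ _) = pp u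
        exact congrArg pp (Units.ext rfl)
      · rintro ⟨⟨A, hA⟩, rfl⟩
        exact ⟨_, rfl, hA.1, hA.2⟩
  obtain ⟨f, hfc, hfr⟩ := hmap
  rw [hfr]
  haveI : CompactSpace S := isCompact_iff_compactSpace.mp hScomp
  exact isCompact_range hfc

end Topology

section Main

variable {k : Type*} [NontriviallyNormedField k] [LocallyCompactSpace k]

lemma no_escape (ω : TopologicalSpace (Q k))
    (hgrp : @IsTopologicalGroup (Q k) ω _) (ht2 : @T2Space (Q k) ω)
    (hco : (QuotientGroup.instTopologicalSpace (Subgroup.center (GL (Fin 2) k))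
        : TopologicalSpace (Q k)) ≤ ω) :
    @nhds _ ω 1 ⊓ @Filter.cocompact (Q k)
      (QuotientGroup.instTopologicalSpace (Subgroup.center (GL (Fin 2) k))) = ⊥ := by
  classical
  haveI : ProperSpace k := ProperSpace.of_nontriviallyNormedField_of_weaklyLocallyCompactSpace k
  by_contra hne
  set coc : Filter (Q k) := @Filter.cocompact (Q k)
      (QuotientGroup.instTopologicalSpace (Subgroup.center (GL (Fin 2) k))) with hcocdef
  haveI hFne : Filter.NeBot (@nhds _ ω 1 ⊓ coc) := ⟨hne⟩
  set 𝒰 : Ultrafilter (Q k) := Ultrafilter.of (@nhds _ ω 1 ⊓ coc) with h𝒰def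
  have h𝒰 : (𝒰 : Filter (Q k)) ≤ @nhds _ ω 1 ⊓ coc :=
    Ultrafilter.of_le _
  have h𝒰1 : (𝒰 : Filter (Q k)) ≤ @nhds _ ω 1 := h𝒰.trans inf_le_left
  have h𝒰2 : (𝒰 : Filter (Q k)) ≤ coc := h𝒰.trans inf_le_right
  have hesc : ∀ ε : ℝ, 0 < ε → (KK (k := k) ε)ᶜ ∈ 𝒰 :=
    fun ε hε => h𝒰2 (@IsCompact.compl_mem_cocompact (Q k)
      (QuotientGroup.instTopologicalSpace (Subgroup.center (GL (Fin 2) k))) _ (KK_isCompact hε))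
  -- decomposition functions
  choose p1f p2f cf bf sf hp1 hp2 hc hb heq hKKf using decomp (k := k)
  -- constant p parts along the ultrafilter
  have hp1c : ∃ P1 : Q k, {g | p1f g = P1} ∈ 𝒰 := by
    rcases 𝒰.em {g | p1f g = 1} with h | h
    · exact ⟨1, h⟩
    · refine ⟨(pp (wgl : GL (Fin 2) k))⁻¹, Filter.mem_of_superset h ?_⟩
      intro g hg
      rcases hp1 g with h1 | h1
      · exact absurd h1 hg
      · exact h1
  have hp2c : ∃ P2 : Q k, {g | p2f g = P2} ∈ 𝒰 := by
    rcases 𝒰.em {g | p2f g = 1} with h | h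
    · exact ⟨1, h⟩
    · refine ⟨(pp (wgl : GL (Fin 2) k))⁻¹, Filter.mem_of_superset h ?_⟩
      intro g hg
      rcases hp2 g with h1 | h1
      · exact absurd h1 hg
      · exact h1
  obtain ⟨P1, hP1⟩ := hp1c
  obtain ⟨P2, hP2⟩ := hp2c
  -- limits of the bounded coordinates
  have hcball : (𝒰.map cf : Filter k) ≤ Filter.principal (Metric.closedBall (0 : k) 1) := by
    rw [Filter.le_principal_iff]
    rw [Ultrafilter.mem_coe, Ultrafilter.mem_map]
    apply Filter.univ_mem'
    intro g
    rw [Set.mem_preimage, Metric.mem_closedBall, dist_zero_right]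
    exact hc g
  obtain ⟨c₀, -, hc₀⟩ :=
    (isCompact_closedBall (0 : k) 1).ultrafilter_le_nhds (𝒰.map cf) hcball
  have hbball : (𝒰.map bf : Filter k) ≤ Filter.principal (Metric.closedBall (0 : k) 1) := by
    rw [Filter.le_principal_iff]
    rw [Ultrafilter.mem_coe, Ultrafilter.mem_map]
    apply Filter.univ_mem'
    intro g
    rw [Set.mem_preimage, Metric.mem_closedBall, dist_zero_right]
    exact hb g
  obtain ⟨b₀, -, hb₀⟩ :=
    (isCompact_closedBall (0 : k) 1).ultrafilter_le_nhds (𝒰.map bf) hbball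
  -- ω-continuity helpers
  have cm : @ContinuousMul (Q k) ω _ := hgrp.toContinuousMul
  have ci : @ContinuousInv (Q k) ω _ := hgrp.toContinuousInv
  have hmul : ∀ {f g : Q k → Q k} {a b : Q k},
      Filter.Tendsto f 𝒰 (@nhds _ ω a) → Filter.Tendsto g 𝒰 (@nhds _ ω b) →
      Filter.Tendsto (fun x => f x * g x) 𝒰 (@nhds _ ω (a * b)) := by
    intro f g a b hf hg
    exact @Filter.Tendsto.mul (Q k) ω _ cm (Q k) f g 𝒰 a b hf hg
  have hinv : ∀ {f : Q k → Q k} {a : Q k},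
      Filter.Tendsto f 𝒰 (@nhds _ ω a) →
      Filter.Tendsto (fun x => (f x)⁻¹) 𝒰 (@nhds _ ω a⁻¹) := by
    intro f a hf
    exact @Filter.Tendsto.inv (Q k) (Q k) ω _ ci _ _ _ hf
  have toω : ∀ {f : Q k → Q k} {a : Q k},
      Filter.Tendsto f 𝒰 (@nhds _ (QuotientGroup.instTopologicalSpace
        (Subgroup.center (GL (Fin 2) k))) a) → Filter.Tendsto f 𝒰 (@nhds _ ω a) :=
    fun hf => hf.mono_right (_root_.nhds_mono hco)
  have hconst : ∀ a : Q k, Filter.Tendsto (fun _ : Q k => a) 𝒰 (@nhds _ ω a) :=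
    fun a => (tendsto_const_nhds : Filter.Tendsto (fun _ : Q k => a) 𝒰 (@nhds _ ω a))
  -- limits
  have hL : Filter.Tendsto (fun g => pp (lgl (cf g))) 𝒰 (@nhds _ ω (pp (lgl c₀))) :=
    toω ((ppl_tendsto c₀).comp hc₀)
  have hU : Filter.Tendsto (fun g => pp (ugl (bf g))) 𝒰 (@nhds _ ω (pp (ugl b₀))) :=
    toω ((ppu_tendsto b₀).comp hb₀)
  have hid : Filter.Tendsto (fun g : Q k => g) 𝒰 (@nhds _ ω 1) := h𝒰1
  have hP1t : Filter.Tendsto p1f 𝒰 (@nhds _ ω P1) := by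
    apply Filter.Tendsto.congr' _ (hconst P1)
    exact Filter.mem_of_superset hP1 (fun g hg => hg.symm)
  have hP2t : Filter.Tendsto p2f 𝒰 (@nhds _ ω P2) := by
    apply Filter.Tendsto.congr' _ (hconst P2)
    exact Filter.mem_of_superset hP2 (fun g hg => hg.symm)
  -- the limit of the torus part
  have hF_eq : ∀ g : Q k, pp (agl (sf g))
      = (pp (lgl (cf g)))⁻¹ * ((p1f g)⁻¹ * g * (p2f g)⁻¹) * (pp (ugl (bf g)))⁻¹ := by
    intro g
    have key : ∀ x p1 p2 L A U : Q k, x = p1 * (L * A * U) * p2 →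
        A = L⁻¹ * (p1⁻¹ * x * p2⁻¹) * U⁻¹ := by
      intro x p1 p2 L A U h
      rw [h]
      group
    exact key g _ _ _ _ _ (heq g)
  have hFt : Filter.Tendsto (fun g => pp (agl (sf g))) 𝒰
      (@nhds _ ω ((pp (lgl c₀))⁻¹ * (P1⁻¹ * 1 * P2⁻¹) * (pp (ugl b₀))⁻¹)) := by
    apply Filter.Tendsto.congr (fun g => (hF_eq g).symm)
    exact hmul (hmul (hinv hL) (hmul (hmul (hinv hP1t) hid) (hinv hP2t))) (hinv hU)
  set q' : Q k := (pp (lgl c₀))⁻¹ * (P1⁻¹ * 1 * P2⁻¹) * (pp (ugl b₀))⁻¹ with hq'def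
  -- the torus coordinate blows up
  have hsinv : Filter.Tendsto (fun g => (((sf g)⁻¹ : kˣ) : k)) 𝒰 (𝓝 (0 : k)) := by
    rw [NormedAddCommGroup.tendsto_nhds_zero]
    intro ε hε
    rcases 𝒰.em {g | ‖(((sf g)⁻¹ : kˣ) : k)‖ < ε} with h | h
    · exact h
    · exfalso
      have hsub : {g : Q k | ‖(((sf g)⁻¹ : kˣ) : k)‖ < ε}ᶜ ⊆ KK (k := k) ε := by
        intro g hg
        have hge : ε ≤ ‖(((sf g)⁻¹ : kˣ) : k)‖ := not_lt.1 hg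
        exact KK_antitone hge (hKKf g)
      have hKKmem : KK (k := k) ε ∈ 𝒰 := Filter.mem_of_superset h hsub
      exact absurd hKKmem ((Ultrafilter.compl_mem_iff_notMem).1 (hesc ε hε))
  have hΦconst : Filter.Tendsto (fun g => pp (lgl ((1 : k) * (((sf g)⁻¹ : kˣ) : k)))) 𝒰
      (@nhds _ (QuotientGroup.instTopologicalSpace
        (Subgroup.center (GL (Fin 2) k))) (1 : Q k)) := by
    have h0 : Filter.Tendsto (fun g => (1 : k) * (((sf g)⁻¹ : kˣ) : k)) 𝒰 (𝓝 (0 : k)) := by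
      simpa using hsinv
    have h1 := (ppl_tendsto (0 : k)).comp h0
    have h2 : pp (lgl (0 : k)) = (1 : Q k) := by rw [lgl_zero]; rfl
    rwa [h2] at h1
  have hconj : ∀ g : Q k, pp (agl (sf g)) * pp (lgl 1) * (pp (agl (sf g)))⁻¹
      = pp (lgl ((1 : k) * (((sf g)⁻¹ : kˣ) : k))) := by
    intro g
    rw [← pp_inv, ← pp_mul, ← pp_mul, agl_lgl_agl_inv]
  have hΦω1 : Filter.Tendsto (fun g => pp (agl (sf g)) * pp (lgl 1) * (pp (agl (sf g)))⁻¹) 𝒰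
      (@nhds _ ω (q' * pp (lgl 1) * q'⁻¹)) :=
    hmul (hmul hFt (hconst _)) (hinv hFt)
  have hΦω2 : Filter.Tendsto (fun g => pp (agl (sf g)) * pp (lgl 1) * (pp (agl (sf g)))⁻¹) 𝒰
      (@nhds _ ω (1 : Q k)) := by
    apply Filter.Tendsto.congr (fun g => (hconj g).symm)
    exact toω hΦconst
  haveI : (𝒰 : Filter (Q k)).NeBot := 𝒰.neBot
  have huniq : q' * pp (lgl 1) * q'⁻¹ = 1 :=
    @tendsto_nhds_unique (Q k) (Q k) ω ht2 _ 𝒰 _ _ _ hΦω1 hΦω2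
  have hone : pp (lgl (1 : k)) = 1 := by
    have h2 : pp (lgl (1 : k)) = q'⁻¹ * (q' * pp (lgl 1) * q'⁻¹) * q' := by group
    rw [huniq] at h2
    rw [h2]
    group
  exact lgl_one_not_center ((QuotientGroup.eq_one_iff _).1 hone)

lemma main_aux (ω : TopologicalSpace (Q k))
    (hgrp : @IsTopologicalGroup (Q k) ω _) (ht2 : @T2Space (Q k) ω)
    (hco : (QuotientGroup.instTopologicalSpace (Subgroup.center (GL (Fin 2) k))
        : TopologicalSpace (Q k)) ≤ ω) :
    ω = QuotientGroup.instTopologicalSpace (Subgroup.center (GL (Fin 2) k)) := by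
  have key := no_escape ω hgrp ht2 hco
  obtain ⟨C, hCcomp, hCmem⟩ : ∃ C : Set (Q k),
      (@IsCompact _ (QuotientGroup.instTopologicalSpace
        (Subgroup.center (GL (Fin 2) k))) C) ∧ C ∈ @nhds _ ω 1 := by
    rcases Filter.inf_eq_bot_iff.mp key with ⟨U, hU, V, hV, hUV⟩
    rcases (@Filter.hasBasis_cocompact (Q k) (QuotientGroup.instTopologicalSpace
      (Subgroup.center (GL (Fin 2) k)))).mem_iff.mp hV with ⟨C, hCcomp, hCV⟩
    refine ⟨C, hCcomp, Filter.mem_of_superset hU ?_⟩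
    intro x hx
    by_contra hxC
    have hmem : x ∈ U ∩ V := ⟨hx, hCV hxC⟩
    rw [hUV] at hmem
    exact hmem
  have hnhds : @nhds _ ω (1 : Q k) ≤ @nhds _ (QuotientGroup.instTopologicalSpace
      (Subgroup.center (GL (Fin 2) k))) 1 := by
    intro U hU
    rcases (@mem_nhds_iff (Q k) (QuotientGroup.instTopologicalSpace
      (Subgroup.center (GL (Fin 2) k))) (1 : Q k) U).mp hU with ⟨O, hOU, hOopen, hO1⟩
    set Fs := C ∩ Oᶜ with hFsdef
    have hFcomp : @IsCompact _ (QuotientGroup.instTopologicalSpace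
        (Subgroup.center (GL (Fin 2) k))) Fs :=
      sigma_compact_inter hCcomp hOopen
    have hFω : @IsCompact _ ω Fs := by
      have hcont : @Continuous _ _ (QuotientGroup.instTopologicalSpace
          (Subgroup.center (GL (Fin 2) k))) ω id := continuous_id_of_le hco
      have himg := @IsCompact.image (Q k) (Q k) (QuotientGroup.instTopologicalSpace
        (Subgroup.center (GL (Fin 2) k))) ω Fs id hFcomp hcont
      rwa [Set.image_id] at himg
    have hFclosed : @IsClosed _ ω Fs := @IsCompact.isClosed _ ω ht2 Fs hFω
    have h1F : (1 : Q k) ∉ Fs := fun h => h.2 hO1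
    have hVmem : C ∩ Fsᶜ ∈ @nhds _ ω 1 := by
      apply Filter.inter_mem hCmem
      exact (hFclosed.isOpen_compl).mem_nhds h1F
    apply Filter.mem_of_superset hVmem
    intro x hx
    have hxO : x ∈ O := by
      by_contra hxO
      exact hx.2 ⟨hx.1, hxO⟩
    exact hOU hxO
  refine @IsTopologicalGroup.ext (Q k) _ ω (QuotientGroup.instTopologicalSpace
    (Subgroup.center (GL (Fin 2) k))) hgrp inferInstance ?_
  exact le_antisymm hnhds (_root_.nhds_mono hco)

end Main

end Stmt7Aux


section Assembly

open Stmt7Aux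

lemma matrix_inv_continuousOn (k : Type*) [NontriviallyNormedField k] :
    ContinuousOn (Inv.inv : Matrix (Fin 2) (Fin 2) k → _) {A | IsUnit A} := by
  have h : ∀ A ∈ {A : Matrix (Fin 2) (Fin 2) k | IsUnit A}, A⁻¹ = (A.det)⁻¹ • A.adjugate := by
    intro A _; rw [Matrix.inv_def, Ring.inverse_eq_inv]
  refine ContinuousOn.congr ?_ h
  refine ContinuousOn.smul (f := fun A : Matrix (Fin 2) (Fin 2) k => (A.det)⁻¹) (g := fun A => A.adjugate) (ContinuousOn.inv₀ (f := fun A : Matrix (Fin 2) (Fin 2) k => A.det) (Continuous.continuousOn ?_) ?_)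
    (Continuous.continuousOn ?_)
  · exact continuous_id.matrix_det
  · intro A hA
    exact ((Matrix.isUnit_iff_isUnit_det A).1 hA).ne_zero
  · exact continuous_id.matrix_adjugate

lemma gl2_eq_units_topology (k : Type*) [NontriviallyNormedField k] :
    gl2Topology k = (Units.instTopologicalSpaceUnits :
      TopologicalSpace (GL (Fin 2) k)) := by
  have h := Units.isEmbedding_val_mk'
      (M := Matrix (Fin 2) (Fin 2) k) (f := Inv.inv) (matrix_inv_continuousOn k)
      (fun u => (Matrix.coe_units_inv u).symm)
  exact h.toIsInducing.eq_induced.symm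

lemma pgl2_eq_quotient_topology (k : Type*) [NontriviallyNormedField k] :
    pgl2Topology k = (QuotientGroup.instTopologicalSpace
      (Subgroup.center (GL (Fin 2) k)) : TopologicalSpace (PGL2 k)) := by
  unfold pgl2Topology
  rw [gl2_eq_units_topology]
  rfl

end Assembly

/-- Let `k` be a local field (a nontrivially normed field that is locally
compact). The group `PGL₂(k)`, endowed with the analytic topology, is a minimal topological
group: it admits no strictly coarser Hausdorff group topology. -/
theorem stmt7 (k : Type*) [NontriviallyNormedField k] [LocallyCompactSpace k]
    (ω : TopologicalSpace (PGL2 k))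
    (hωgrp : @IsTopologicalGroup (PGL2 k) ω _) (hωt2 : @T2Space (PGL2 k) ω)
    (hcoarser : pgl2Topology k ≤ ω) :
    ω = pgl2Topology k := by
  rw [pgl2_eq_quotient_topology] at hcoarser ⊢
  exact Stmt7Aux.main_aux ω hωgrp hωt2 hcoarser
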